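/- For programs P, Q and a set of atoms A, the following are equivalent: (1) there is a program R over A with SM(P ∪ R) ⊄ SM(Q ∪ R); (2) there is a unary program U over A (rules of form a ← or a ← b with a, b ∈ A) with SM(P ∪ U) ⊄ SM(Q ∪ U); (3) there exists an interpretation Y such that (a) Y ⊨ P, (b) for each Y' ⊂ Y with Y' ∩ A = Y ∩ A, Y' ⊭ P^Y, and (c) if Y ⊨ Q then there exists X ⊂ Y with X ⊨ Q^Y and for each X' ⊂ Y with X' ∩ A = X ∩ A, X' ⊭ P^Y. -/

import Mathlib

structure Rule where
  head : Finset ℕ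
  pos : Finset ℕ
  neg : Finset ℕ

abbrev Interp := Set ℕ
abbrev Program := Set Rule

/-- Classical satisfaction of a rule by an interpretation. -/
def Rule.satisfied (I : Interp) (r : Rule) : Prop :=
  ((↑r.pos ⊆ I) ∧ ∀ a ∈ r.neg, a ∉ I) → ∃ a ∈ r.head, a ∈ I

/-- `I` is a classical model of the program `P`. -/
def Models (I : Interp) (P : Program) : Prop := ∀ r ∈ P, Rule.satisfied I r

/-- `X` models the Gelfond-Lifschitz reduct `P^Y`. -/
def ModelsReduct (X : Interp) (P : Program) (Y : Interp) : Prop :=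
  ∀ r ∈ P, (∀ a ∈ r.neg, a ∉ Y) → (↑r.pos ⊆ X) → ∃ a ∈ r.head, a ∈ X

/-- `Y` is an answer set of `P`: a minimal model of the reduct `P^Y`. -/
def AnswerSet (P : Program) (Y : Interp) : Prop :=
  ModelsReduct Y P Y ∧ ∀ Z : Interp, Z ⊂ Y → ¬ ModelsReduct Z P Y

/-- `(X,Y)` is an SE-model of `P`. -/
def SEModel (P : Program) (X Y : Interp) : Prop :=
  X ⊆ Y ∧ Models Y P ∧ ModelsReduct X P Y

/-- `(X,Y)` is a UE-model of `P`. -/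
def UEModel (P : Program) (X Y : Interp) : Prop :=
  SEModel P X Y ∧ ∀ X', SEModel P X' Y → X ⊂ X' → X' = Y

/-- The program consisting of the atoms in `F` as facts. -/
def Facts (F : Set ℕ) : Program := { r | ∃ a ∈ F, r = ⟨{a}, ∅, ∅⟩ }

/-- Uniform equivalence of programs. -/
def UnifEquiv (P Q : Program) : Prop :=
  ∀ F : Set ℕ, ∀ Y : Interp, AnswerSet (P ∪ Facts F) Y ↔ AnswerSet (Q ∪ Facts F) Y

/-- Strong equivalence of programs. -/
def StrongEquiv (P Q : Program) : Prop :=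
  ∀ R : Program, ∀ Y : Interp, AnswerSet (P ∪ R) Y ↔ AnswerSet (Q ∪ R) Y

def Rule.atoms (r : Rule) : Finset ℕ := r.head ∪ r.pos ∪ r.neg

/-- All atoms occurring in `R` belong to `A`. -/
def ProgramOver (A : Set ℕ) (R : Program) : Prop := ∀ r ∈ R, ↑r.atoms ⊆ A

/-- Strong equivalence relative to a set of atoms `A`. -/
def RelStrongEquiv (A : Set ℕ) (P Q : Program) : Prop :=
  ∀ R : Program, ProgramOver A R →
    ∀ Y : Interp, AnswerSet (P ∪ R) Y ↔ AnswerSet (Q ∪ R) Y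

/-- Uniform equivalence relative to a set of atoms `A`. -/
def RelUnifEquiv (A : Set ℕ) (P Q : Program) : Prop :=
  ∀ F : Set ℕ, F ⊆ A →
    ∀ Y : Interp, AnswerSet (P ∪ Facts F) Y ↔ AnswerSet (Q ∪ Facts F) Y

/-- A unary rule: one head atom, no negation, at most one positive body atom. -/
def Unary (r : Rule) : Prop := r.head.card = 1 ∧ r.neg = ∅ ∧ r.pos.card ≤ 1

/-- `(X,Y)` is a (relativized) `A`-SE-model of `P`. -/
def ASEModel (A : Set ℕ) (P : Program) (X Y : Interp) : Prop :=
  (X = Y ∨ X ⊂ Y ∩ A) ∧ Models Y P ∧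
  (∀ Y' : Interp, Y' ⊂ Y → Y' ∩ A = Y ∩ A → ¬ ModelsReduct Y' P Y) ∧
  (X ⊂ Y → ∃ X' : Interp, X' ⊆ Y ∧ X' ∩ A = X ∧ ModelsReduct X' P Y)

/-- `(X,Y)` is a (relativized) `A`-UE-model of `P`. -/
def AUEModel (A : Set ℕ) (P : Program) (X Y : Interp) : Prop :=
  ASEModel A P X Y ∧ ∀ X', ASEModel A P X' Y → X ⊂ X' → X' = Y

/-- A positive program: all rules have empty negative body. -/
def Positive (P : Program) : Prop := ∀ r ∈ P, r.neg = ∅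

/-- Positive dependency: edge from a positive body atom to a head atom. -/
def Dep (P : Program) (a b : ℕ) : Prop := ∃ r ∈ P, a ∈ r.pos ∧ b ∈ r.head

/-- Head-cycle freeness: no directed cycle of the positive dependency graph
through two distinct head atoms of one rule. -/
def HCF (P : Program) : Prop :=
  ∀ r ∈ P, ∀ a ∈ r.head, ∀ b ∈ r.head, a ≠ b →
    ¬ (Relation.ReflTransGen (Dep P) a b ∧ Relation.ReflTransGen (Dep P) b a)

/-- The shift of a single rule. -/
def Rule.shift (r : Rule) : Program :=
  if r.head = ∅ then {r}
  else { r' | ∃ a ∈ r.head, r' = ⟨{a}, r.pos, r.neg ∪ (r.head.erase a)⟩ }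

/-- The shift of a program. -/
def shiftProg (P : Program) : Program := ⋃ r ∈ P, r.shift

/-- The set of SE-models of `P` as a set of pairs. -/
def SEset (P : Program) : Set (Interp × Interp) := { p | SEModel P p.1 p.2 }

lemma models_iff_reduct (Y : Interp) (P : Program) :
    Models Y P ↔ ModelsReduct Y P Y := by
  constructor
  · intro h r hr hneg hpos
    exact h r hr ⟨hpos, hneg⟩
  · rintro h r hr ⟨hpos, hneg⟩
    exact h r hr hneg hpos

lemma reduct_union (X : Interp) (P R : Program) (Y : Interp) :
    ModelsReduct X (P ∪ R) Y ↔ ModelsReduct X P Y ∧ ModelsReduct X R Y := by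
  constructor
  · intro h
    exact ⟨fun r hr => h r (Or.inl hr), fun r hr => h r (Or.inr hr)⟩
  · rintro ⟨h1, h2⟩ r (hr | hr)
    exacts [h1 r hr, h2 r hr]

lemma one_to_three (P Q : Program) (A : Set ℕ) (R : Program) (hR : ProgramOver A R)
    (Y : Interp) (hPas : AnswerSet (P ∪ R) Y) (hQ : ¬ AnswerSet (Q ∪ R) Y) :
    Models Y P ∧
      (∀ Y' : Interp, Y' ⊂ Y → Y' ∩ A = Y ∩ A → ¬ ModelsReduct Y' P Y) ∧
      (Models Y Q → ∃ X : Interp, X ⊂ Y ∧ ModelsReduct X Q Y ∧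
        ∀ X' : Interp, X' ⊂ Y → X' ∩ A = X ∩ A → ¬ ModelsReduct X' P Y) := by
  obtain ⟨hYmod, hYmin⟩ := hPas
  rw [reduct_union] at hYmod
  obtain ⟨hYP, hYR⟩ := hYmod
  have key : ∀ X X' : Interp, X' ∩ A = X ∩ A → ModelsReduct X R Y →
      ModelsReduct X' R Y := by
    intro X X' hXA hXR r hr hneg hpos
    have hatoms := hR r hr
    have hposX : ↑r.pos ⊆ X := by
      intro a ha
      have haA : a ∈ A := hatoms (by simp [Rule.atoms]; tauto)
      have : a ∈ X' ∩ A := ⟨hpos ha, haA⟩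
      rw [hXA] at this; exact this.1
    obtain ⟨a, haH, haX⟩ := hXR r hr hneg hposX
    have haA : a ∈ A := hatoms (by simp [Rule.atoms]; tauto)
    have : a ∈ X ∩ A := ⟨haX, haA⟩
    rw [← hXA] at this
    exact ⟨a, haH, this.1⟩
  refine ⟨(models_iff_reduct Y P).2 hYP, ?_, ?_⟩
  · intro Y' hY' hYA hY'P
    exact hYmin Y' hY' ((reduct_union _ _ _ _).2 ⟨hY'P, key Y Y' hYA hYR⟩)
  · intro hYQ
    by_cases hYQR : ModelsReduct Y (Q ∪ R) Y
    · have hne : ¬ ∀ Z : Interp, Z ⊂ Y → ¬ ModelsReduct Z (Q ∪ R) Y :=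
        fun h => hQ ⟨hYQR, h⟩
      push_neg at hne
      obtain ⟨X, hXY, hXm⟩ := hne
      rw [reduct_union] at hXm
      refine ⟨X, hXY, hXm.1, ?_⟩
      intro X' hX'Y hXA hX'P
      exact hYmin X' hX'Y ((reduct_union _ _ _ _).2 ⟨hX'P, key X X' hXA hXm.2⟩)
    · exact absurd ((reduct_union _ _ _ _).2
        ⟨(models_iff_reduct Y Q).1 hYQ, hYR⟩) hYQR

lemma three_to_two (P Q : Program) (A : Set ℕ) (Y : Interp)
    (hP : Models Y P)
    (hmin : ∀ Y' : Interp, Y' ⊂ Y → Y' ∩ A = Y ∩ A → ¬ ModelsReduct Y' P Y)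
    (hc : Models Y Q → ∃ X : Interp, X ⊂ Y ∧ ModelsReduct X Q Y ∧
        ∀ X' : Interp, X' ⊂ Y → X' ∩ A = X ∩ A → ¬ ModelsReduct X' P Y) :
    ∃ U : Program, ProgramOver A U ∧ (∀ r ∈ U, Unary r) ∧
      ∃ Z : Interp, AnswerSet (P ∪ U) Z ∧ ¬ AnswerSet (Q ∪ U) Z := by
  by_cases hYQ : Models Y Q
  · obtain ⟨X, hXY, hXQ, hXkey⟩ := hc hYQ
    set U : Program := Facts (X ∩ A) ∪
      { r | ∃ a b : ℕ, a ∈ Y ∩ A ∧ a ∉ X ∧ b ∈ Y ∩ A ∧ b ∉ X ∧ r = ⟨{a}, {b}, ∅⟩ }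
      with hU
    have hfacts : ∀ a ∈ X ∩ A, (⟨{a}, ∅, ∅⟩ : Rule) ∈ U :=
      fun a ha => Or.inl ⟨a, ha, rfl⟩
    have hrules : ∀ a b : ℕ, a ∈ Y ∩ A → a ∉ X → b ∈ Y ∩ A → b ∉ X →
        (⟨{a}, {b}, ∅⟩ : Rule) ∈ U :=
      fun a b h1 h2 h3 h4 => Or.inr ⟨a, b, h1, h2, h3, h4, rfl⟩
    refine ⟨U, ?_, ?_, Y, ⟨?_, ?_⟩, ?_⟩
    · rintro r (⟨a, ha, rfl⟩ | ⟨a, b, ha, -, hb, -, rfl⟩) x hx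
      · simp [Rule.atoms] at hx; rcases hx with rfl; exact ha.2
      · simp [Rule.atoms] at hx
        rcases hx with h | h
        · subst h; exact ha.2
        · subst h; exact hb.2
    · rintro r (⟨a, ha, rfl⟩ | ⟨a, b, ha, -, hb, -, rfl⟩) <;> simp [Unary]
    · rw [reduct_union]
      refine ⟨(models_iff_reduct Y P).1 hP, ?_⟩
      rintro r (⟨a, ha, rfl⟩ | ⟨a, b, ha, -, hb, -, rfl⟩) _ _
      · exact ⟨a, Finset.mem_singleton_self a, hXY.1 ha.1⟩
      · exact ⟨a, Finset.mem_singleton_self a, ha.1⟩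
    · intro Z hZY hZm
      rw [reduct_union] at hZm
      obtain ⟨hZP, hZU⟩ := hZm
      have hXAZ : X ∩ A ⊆ Z := by
        intro a ha
        obtain ⟨c, hc1, hc2⟩ := hZU _ (hfacts a ha) (by simp) (by simp)
        rw [Finset.mem_singleton] at hc1; subst hc1; exact hc2
      by_cases hb : ∃ b ∈ Z, b ∈ Y ∩ A ∧ b ∉ X
      · obtain ⟨b, hbZ, hbYA, hbX⟩ := hb
        have hZA : Z ∩ A = Y ∩ A := by
          apply Set.Subset.antisymm
          · exact fun x hx => ⟨hZY.1 hx.1, hx.2⟩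
          · intro a haYA
            by_cases haX : a ∈ X
            · exact ⟨hXAZ ⟨haX, haYA.2⟩, haYA.2⟩
            · obtain ⟨c, hc1, hc2⟩ := hZU _ (hrules a b haYA haX hbYA hbX)
                (by simp) (by simp [hbZ])
              rw [Finset.mem_singleton] at hc1; subst hc1
              exact ⟨hc2, haYA.2⟩
        exact hmin Z hZY hZA hZP
      · push_neg at hb
        have hZA : Z ∩ A = X ∩ A := by
          apply Set.Subset.antisymm
          · rintro a ⟨haZ, haA⟩
            by_cases haX : a ∈ X
            · exact ⟨haX, haA⟩
            · exact absurd (hb a haZ ⟨hZY.1 haZ, haA⟩) haX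
          · exact fun a ha => ⟨hXAZ ha, ha.2⟩
        exact hXkey Z hZY hZA hZP
    · rintro ⟨-, hQmin⟩
      apply hQmin X hXY
      rw [reduct_union]
      refine ⟨hXQ, ?_⟩
      rintro r (⟨a, ha, rfl⟩ | ⟨a, b, ha, haX, hb, hbX, rfl⟩) _ hpos
      · exact ⟨a, Finset.mem_singleton_self a, ha.1⟩
      · exfalso
        exact hbX (hpos (by simp))
  · refine ⟨Facts (Y ∩ A), ?_, ?_, Y, ⟨?_, ?_⟩, ?_⟩
    · rintro r ⟨a, ha, rfl⟩ x hx
      simp [Rule.atoms] at hx; rcases hx with rfl; exact ha.2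
    · rintro r ⟨a, ha, rfl⟩; simp [Unary]
    · rw [reduct_union]
      refine ⟨(models_iff_reduct Y P).1 hP, ?_⟩
      rintro r ⟨a, ha, rfl⟩ _ _
      exact ⟨a, Finset.mem_singleton_self a, ha.1⟩
    · intro Z hZY hZm
      rw [reduct_union] at hZm
      obtain ⟨hZP, hZU⟩ := hZm
      have hZA : Z ∩ A = Y ∩ A := by
        apply Set.Subset.antisymm
        · exact fun x hx => ⟨hZY.1 hx.1, hx.2⟩
        · intro a ha
          obtain ⟨c, hc1, hc2⟩ := hZU _ ⟨a, ha, rfl⟩ (by simp) (by simp)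
          rw [Finset.mem_singleton] at hc1; subst hc1
          exact ⟨hc2, ha.2⟩
      exact hmin Z hZY hZA hZP
    · rintro ⟨hm, -⟩
      rw [reduct_union] at hm
      exact hYQ ((models_iff_reduct Y Q).2 hm.1)

theorem stmt9 (P Q : Program) (A : Set ℕ) :
    ((∃ R : Program, ProgramOver A R ∧
        ∃ Y : Interp, AnswerSet (P ∪ R) Y ∧ ¬ AnswerSet (Q ∪ R) Y) ↔
      (∃ Y : Interp, Models Y P ∧
        (∀ Y' : Interp, Y' ⊂ Y → Y' ∩ A = Y ∩ A → ¬ ModelsReduct Y' P Y) ∧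
        (Models Y Q → ∃ X : Interp, X ⊂ Y ∧ ModelsReduct X Q Y ∧
          ∀ X' : Interp, X' ⊂ Y → X' ∩ A = X ∩ A → ¬ ModelsReduct X' P Y))) ∧
    ((∃ U : Program, ProgramOver A U ∧ (∀ r ∈ U, Unary r) ∧
        ∃ Y : Interp, AnswerSet (P ∪ U) Y ∧ ¬ AnswerSet (Q ∪ U) Y) ↔
      (∃ Y : Interp, Models Y P ∧
        (∀ Y' : Interp, Y' ⊂ Y → Y' ∩ A = Y ∩ A → ¬ ModelsReduct Y' P Y) ∧
        (Models Y Q → ∃ X : Interp, X ⊂ Y ∧ ModelsReduct X Q Y ∧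
          ∀ X' : Interp, X' ⊂ Y → X' ∩ A = X ∩ A → ¬ ModelsReduct X' P Y))) := by
  constructor
  · constructor
    · rintro ⟨R, hR, Y, h1, h2⟩
      exact ⟨Y, one_to_three P Q A R hR Y h1 h2⟩
    · rintro ⟨Y, h1, h2, h3⟩
      obtain ⟨U, hU1, hU2, Z, h⟩ := three_to_two P Q A Y h1 h2 h3
      exact ⟨U, hU1, Z, h⟩
  · constructor
    · rintro ⟨U, hU1, hU2, Y, h1, h2⟩
      exact ⟨Y, one_to_three P Q A U hU1 Y h1 h2⟩
    · rintro ⟨Y, h1, h2, h3⟩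
      exact three_to_two P Q A Y h1 h2 h3
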